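/- arXiv:1311.7125 — 3 statements merged into one kernel-verified Lean document; each statement's English description precedes it below -/
import Mathlib

section
/- For all natural numbers m, n with 0 ≤ m < n: hom(E_1^m, E_1^n) = 0, ext1(E_1^m, E_1^n) = n − m − 1, hom(E_1^n, E_1^m) = 1 + n − m, and ext1(E_1^n, E_1^m) = 0. -/
noncomputable section

open Module

universe u

/-- A representation of the quiver `Q1` (vertices 1, 2, 3; arrows 1→3, 1→2, 2→3)
over the field `k`, with finite-dimensional vector spaces at the vertices. -/
structure RepQ1 (k : Type u) [Field k] where
  V1 : Type u
  V2 : Type u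
  V3 : Type u
  [acg1 : AddCommGroup V1]
  [acg2 : AddCommGroup V2]
  [acg3 : AddCommGroup V3]
  [mod1 : Module k V1]
  [mod2 : Module k V2]
  [mod3 : Module k V3]
  [fd1 : FiniteDimensional k V1]
  [fd2 : FiniteDimensional k V2]
  [fd3 : FiniteDimensional k V3]
  r13 : V1 →ₗ[k] V3
  r12 : V1 →ₗ[k] V2
  r23 : V2 →ₗ[k] V3

attribute [instance] RepQ1.acg1 RepQ1.acg2 RepQ1.acg3 RepQ1.mod1 RepQ1.mod2 RepQ1.mod3
  RepQ1.fd1 RepQ1.fd2 RepQ1.fd3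

namespace RepQ1

variable {k : Type u} [Field k]

/-- The space of morphisms of representations `ρ → ρ'`:
triples `(f₁, f₂, f₃)` of linear maps commuting with the structure maps. -/
def homSpace (ρ ρ' : RepQ1 k) :
    Submodule k ((ρ.V1 →ₗ[k] ρ'.V1) × (ρ.V2 →ₗ[k] ρ'.V2) × (ρ.V3 →ₗ[k] ρ'.V3)) where
  carrier := { f | f.2.2 ∘ₗ ρ.r13 = ρ'.r13 ∘ₗ f.1 ∧
                   f.2.1 ∘ₗ ρ.r12 = ρ'.r12 ∘ₗ f.1 ∧
                   f.2.2 ∘ₗ ρ.r23 = ρ'.r23 ∘ₗ f.2.1 }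
  add_mem' := by
    rintro f g ⟨h1, h2, h3⟩ ⟨h1', h2', h3'⟩
    refine ⟨?_, ?_, ?_⟩ <;>
      simp only [Prod.fst_add, Prod.snd_add, LinearMap.add_comp, LinearMap.comp_add,
        h1, h2, h3, h1', h2', h3']
  zero_mem' := by
    refine ⟨?_, ?_, ?_⟩ <;> simp
  smul_mem' := by
    rintro c f ⟨h1, h2, h3⟩
    refine ⟨?_, ?_, ?_⟩ <;>
      simp only [Prod.smul_fst, Prod.smul_snd, LinearMap.smul_comp, LinearMap.comp_smul,
        h1, h2, h3]

/-- `hom ρ ρ'` is the `k`-dimension of the space of morphisms of representations `ρ → ρ'`. -/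
def hom (ρ ρ' : RepQ1 k) : ℕ := finrank k (homSpace ρ ρ')

/-- The linear map `Φ` whose cokernel computes `Ext¹(ρ, ρ')`. -/
def phi (ρ ρ' : RepQ1 k) :
    ((ρ.V1 →ₗ[k] ρ'.V1) × (ρ.V2 →ₗ[k] ρ'.V2) × (ρ.V3 →ₗ[k] ρ'.V3)) →ₗ[k]
      ((ρ.V1 →ₗ[k] ρ'.V3) × (ρ.V1 →ₗ[k] ρ'.V2) × (ρ.V2 →ₗ[k] ρ'.V3)) where
  toFun g := (g.2.2 ∘ₗ ρ.r13 - ρ'.r13 ∘ₗ g.1,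
              g.2.1 ∘ₗ ρ.r12 - ρ'.r12 ∘ₗ g.1,
              g.2.2 ∘ₗ ρ.r23 - ρ'.r23 ∘ₗ g.2.1)
  map_add' g h := by
    refine Prod.ext ?_ (Prod.ext ?_ ?_) <;>
      · simp only [Prod.fst_add, Prod.snd_add, LinearMap.add_comp, LinearMap.comp_add]
        abel
  map_smul' c g := by
    refine Prod.ext ?_ (Prod.ext ?_ ?_) <;>
      simp [LinearMap.smul_comp, LinearMap.comp_smul, smul_sub]

/-- `ext1 ρ ρ'` is the `k`-dimension of the cokernel of `Φ`; it equals
`dim Ext¹(ρ, ρ')` in the abelian category of representations of `Q1`. -/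
def ext1 (ρ ρ' : RepQ1 k) : ℕ :=
  finrank k (((ρ.V1 →ₗ[k] ρ'.V3) × (ρ.V1 →ₗ[k] ρ'.V2) × (ρ.V2 →ₗ[k] ρ'.V3)) ⧸
    LinearMap.range (phi ρ ρ'))

/-- A representation is exceptional if `hom ρ ρ = 1` and `ext1 ρ ρ = 0`. -/
def IsExceptional (ρ : RepQ1 k) : Prop := hom ρ ρ = 1 ∧ ext1 ρ ρ = 0

/-- Isomorphism of representations of `Q1`. -/
def Iso (ρ ρ' : RepQ1 k) : Prop :=
  ∃ (e1 : ρ.V1 ≃ₗ[k] ρ'.V1) (e2 : ρ.V2 ≃ₗ[k] ρ'.V2) (e3 : ρ.V3 ≃ₗ[k] ρ'.V3),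
    e3.toLinearMap ∘ₗ ρ.r13 = ρ'.r13 ∘ₗ e1.toLinearMap ∧
    e2.toLinearMap ∘ₗ ρ.r12 = ρ'.r12 ∘ₗ e1.toLinearMap ∧
    e3.toLinearMap ∘ₗ ρ.r23 = ρ'.r23 ∘ₗ e2.toLinearMap

end RepQ1

variable (k : Type u) [Field k]

/-- `π₊^m : k^{m+1} → k^m`, `(a₁,…,a_{m+1}) ↦ (a₁,…,a_m)`. -/
def piPlus (m : ℕ) : (Fin (m + 1) → k) →ₗ[k] (Fin m → k) :=
  LinearMap.funLeft k k Fin.castSucc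

/-- `π₋^m : k^{m+1} → k^m`, `(a₁,…,a_{m+1}) ↦ (a₂,…,a_{m+1})`. -/
def piMinus (m : ℕ) : (Fin (m + 1) → k) →ₗ[k] (Fin m → k) :=
  LinearMap.funLeft k k Fin.succ

/-- `j₊^m : k^m → k^{m+1}`, `(a₁,…,a_m) ↦ (a₁,…,a_m,0)`. -/
def jPlus (m : ℕ) : (Fin m → k) →ₗ[k] (Fin (m + 1) → k) where
  toFun a := Fin.snoc a 0
  map_add' a b := by
    ext i
    induction i using Fin.lastCases <;> simp
  map_smul' c a := by
    ext i
    induction i using Fin.lastCases <;> simp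

/-- `j₋^m : k^m → k^{m+1}`, `(a₁,…,a_m) ↦ (0,a₁,…,a_m)`. -/
def jMinus (m : ℕ) : (Fin m → k) →ₗ[k] (Fin (m + 1) → k) where
  toFun a := Fin.cons 0 a
  map_add' a b := by
    ext i
    induction i using Fin.cases <;> simp
  map_smul' c a := by
    ext i
    induction i using Fin.cases <;> simp

/-- The representation `E₁^m = (k^{m+1}, k^m, k^m)` with `ρ₁₃ = π₊^m`, `ρ₁₂ = π₋^m`, `ρ₂₃ = id`. -/
def E1 (m : ℕ) : RepQ1 k where
  V1 := Fin (m + 1) → k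
  V2 := Fin m → k
  V3 := Fin m → k
  r13 := piPlus k m
  r12 := piMinus k m
  r23 := LinearMap.id

/-- The representation `E₂^m = (k^m, k^{m+1}, k^{m+1})` with `ρ₁₃ = j₊^m`, `ρ₁₂ = j₋^m`, `ρ₂₃ = id`. -/
def E2 (m : ℕ) : RepQ1 k where
  V1 := Fin m → k
  V2 := Fin (m + 1) → k
  V3 := Fin (m + 1) → k
  r13 := jPlus k m
  r12 := jMinus k m
  r23 := LinearMap.id

/-- The representation `E₃^m = (k^m, k^m, k^{m+1})` with `ρ₁₃ = j₊^m`, `ρ₁₂ = id`, `ρ₂₃ = j₋^m`. -/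
def E3 (m : ℕ) : RepQ1 k where
  V1 := Fin m → k
  V2 := Fin m → k
  V3 := Fin (m + 1) → k
  r13 := jPlus k m
  r12 := LinearMap.id
  r23 := jMinus k m

/-- The representation `E₄^m = (k^{m+1}, k^{m+1}, k^m)` with `ρ₁₃ = π₊^m`, `ρ₁₂ = id`, `ρ₂₃ = π₋^m`. -/
def E4 (m : ℕ) : RepQ1 k where
  V1 := Fin (m + 1) → k
  V2 := Fin (m + 1) → k
  V3 := Fin m → k
  r13 := piPlus k m
  r12 := LinearMap.id
  r23 := piMinus k m

/-- The representation `M = (0, k, 0)` with zero structure maps. -/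
def Mrep : RepQ1 k where
  V1 := Fin 0 → k
  V2 := Fin 1 → k
  V3 := Fin 0 → k
  r13 := 0
  r12 := 0
  r23 := 0

/-- The representation `M' = (k, 0, k)` with `ρ₁₃ = id` and the other structure maps zero. -/
def Mprep : RepQ1 k where
  V1 := Fin 1 → k
  V2 := Fin 0 → k
  V3 := Fin 1 → k
  r13 := LinearMap.id
  r12 := 0
  r23 := 0

namespace RepQ1

variable {k : Type u} [Field k]

/-- An exceptional pair `(X, Y)`: both `X` and `Y` are exceptional and
`hom (Y, X) = 0` and `ext1 (Y, X) = 0`. -/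
def IsExceptionalPair (X Y : RepQ1 k) : Prop :=
  X.IsExceptional ∧ Y.IsExceptional ∧ hom Y X = 0 ∧ ext1 Y X = 0

/-- An exceptional triple `(A, B, C)`: `(A,B)`, `(B,C)` and `(A,C)` are exceptional pairs. -/
def IsExceptionalTriple (A B C : RepQ1 k) : Prop :=
  IsExceptionalPair A B ∧ IsExceptionalPair B C ∧ IsExceptionalPair A C

/-- A morphism of representations of `Q1`. -/
structure Homo (ρ ρ' : RepQ1 k) where
  f1 : ρ.V1 →ₗ[k] ρ'.V1
  f2 : ρ.V2 →ₗ[k] ρ'.V2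
  f3 : ρ.V3 →ₗ[k] ρ'.V3
  comm13 : f3 ∘ₗ ρ.r13 = ρ'.r13 ∘ₗ f1
  comm12 : f2 ∘ₗ ρ.r12 = ρ'.r12 ∘ₗ f1
  comm23 : f3 ∘ₗ ρ.r23 = ρ'.r23 ∘ₗ f2

/-- `0 → A → C → B → 0` is a short exact sequence of representations of `Q1`:
at each vertex the induced sequence of vector spaces is short exact. -/
def IsSES {A C B : RepQ1 k} (f : Homo A C) (g : Homo C B) : Prop :=
  Function.Injective f.f1 ∧ Function.Injective f.f2 ∧ Function.Injective f.f3 ∧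
  Function.Surjective g.f1 ∧ Function.Surjective g.f2 ∧ Function.Surjective g.f3 ∧
  LinearMap.range f.f1 = LinearMap.ker g.f1 ∧
  LinearMap.range f.f2 = LinearMap.ker g.f2 ∧
  LinearMap.range f.f3 = LinearMap.ker g.f3

/-- A representation is zero when all its vector spaces are zero. -/
def IsZeroRep (ρ : RepQ1 k) : Prop :=
  Subsingleton ρ.V1 ∧ Subsingleton ρ.V2 ∧ Subsingleton ρ.V3

end RepQ1

/-- The (vertexwise) direct sum of two representations of `Q1`. -/
def RepQ1.dsum {k : Type u} [Field k] (ρ σ : RepQ1 k) : RepQ1 k where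
  V1 := ρ.V1 × σ.V1
  V2 := ρ.V2 × σ.V2
  V3 := ρ.V3 × σ.V3
  r13 := ρ.r13.prodMap σ.r13
  r12 := ρ.r12.prodMap σ.r12
  r23 := ρ.r23.prodMap σ.r23


namespace StatementTwoAux

open RepQ1 Module

variable {k : Type u} [Field k]

lemma phi_apply (ρ ρ' : RepQ1 k) (f) :
    RepQ1.phi ρ ρ' f = (f.2.2 ∘ₗ ρ.r13 - ρ'.r13 ∘ₗ f.1,
      f.2.1 ∘ₗ ρ.r12 - ρ'.r12 ∘ₗ f.1,
      f.2.2 ∘ₗ ρ.r23 - ρ'.r23 ∘ₗ f.2.1) := rfl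

lemma mem_homSpace_iff {ρ ρ' : RepQ1 k} (f) :
    f ∈ RepQ1.homSpace ρ ρ' ↔ (f.2.2 ∘ₗ ρ.r13 = ρ'.r13 ∘ₗ f.1 ∧
      f.2.1 ∘ₗ ρ.r12 = ρ'.r12 ∘ₗ f.1 ∧
      f.2.2 ∘ₗ ρ.r23 = ρ'.r23 ∘ₗ f.2.1) := Iff.rfl

lemma homSpace_eq_ker (ρ ρ' : RepQ1 k) :
    RepQ1.homSpace ρ ρ' = LinearMap.ker (RepQ1.phi ρ ρ') := by
  ext f
  rw [mem_homSpace_iff, LinearMap.mem_ker, phi_apply, Prod.ext_iff, Prod.ext_iff]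
  simp [sub_eq_zero]

lemma hom_add_eq (ρ ρ' : RepQ1 k) :
    RepQ1.hom ρ ρ' + finrank k ((ρ.V1 →ₗ[k] ρ'.V3) × (ρ.V1 →ₗ[k] ρ'.V2) × (ρ.V2 →ₗ[k] ρ'.V3))
    = RepQ1.ext1 ρ ρ'
      + finrank k ((ρ.V1 →ₗ[k] ρ'.V1) × (ρ.V2 →ₗ[k] ρ'.V2) × (ρ.V3 →ₗ[k] ρ'.V3)) := by
  have h1 := LinearMap.finrank_range_add_finrank_ker (RepQ1.phi ρ ρ')
  have h2 := Submodule.finrank_quotient_add_finrank (LinearMap.range (RepQ1.phi ρ ρ'))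
  rw [RepQ1.hom, homSpace_eq_ker, RepQ1.ext1]
  omega

lemma flin (a b : ℕ) : finrank k ((Fin a → k) →ₗ[k] (Fin b → k)) = a * b := by
  rw [Module.finrank_linearMap, Module.finrank_fin_fun, Module.finrank_fin_fun]

end StatementTwoAux
namespace StatementTwoAux2
open StatementTwoAux RepQ1 Module

variable {k : Type u} [Field k]

lemma piPlus_single_mk (m c : ℕ) (hc : c < m) (h' : c < m + 1) :
    piPlus k m (Pi.single (⟨c, h'⟩ : Fin (m+1)) (1:k)) = Pi.single (⟨c, hc⟩ : Fin m) 1 := by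
  funext i
  rcases i with ⟨i, hi⟩
  simp [piPlus, LinearMap.funLeft_apply, Pi.single_apply, Fin.ext_iff]

lemma piPlus_single_last (m : ℕ) (h' : m < m + 1) :
    piPlus k m (Pi.single (⟨m, h'⟩ : Fin (m+1)) (1:k)) = 0 := by
  funext i
  rcases i with ⟨i, hi⟩
  simp [piPlus, LinearMap.funLeft_apply, Pi.single_apply, Fin.ext_iff]
  omega

lemma piMinus_single_mk (m c : ℕ) (hc : c < m) (h' : c + 1 < m + 1) :
    piMinus k m (Pi.single (⟨c + 1, h'⟩ : Fin (m+1)) (1:k)) = Pi.single (⟨c, hc⟩ : Fin m) 1 := by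
  funext i
  rcases i with ⟨i, hi⟩
  simp [piMinus, LinearMap.funLeft_apply, Pi.single_apply, Fin.ext_iff]

lemma piMinus_single_zero (m : ℕ) (h' : 0 < m + 1) :
    piMinus k m (Pi.single (⟨0, h'⟩ : Fin (m+1)) (1:k)) = 0 := by
  funext i
  rcases i with ⟨i, hi⟩
  simp [piMinus, LinearMap.funLeft_apply, Pi.single_apply, Fin.ext_iff]

lemma pi_ext_one {a : ℕ} {N : Type u} [AddCommGroup N] [Module k N]
    {f g : (Fin a → k) →ₗ[k] N}
    (h : ∀ j, f (Pi.single j 1) = g (Pi.single j 1)) : f = g := by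
  apply LinearMap.pi_ext
  intro j x
  have hx : (Pi.single j x : Fin a → k) = x • (Pi.single j 1 : Fin a → k) := by
    funext i
    simp [Pi.single_apply, mul_ite]
  rw [hx, map_smul, map_smul, h j]

lemma matrix_zero {A : ℕ → ℕ → k} {p q : ℕ}
    (hz1 : ∀ r, r < p → A (r+1) 0 = 0)
    (hz2 : ∀ r, r < p → A r q = 0)
    (hdiag : ∀ r c, r < p → c < q → A (r+1) (c+1) = A r c)
    (hseed : ∀ e, p + e ≤ q → A 0 e = 0) :
    ∀ r c, r ≤ p → c ≤ q → A r c = 0 := by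
  have hshift : ∀ t r c, r + t ≤ p → c + t ≤ q → A (r+t) (c+t) = A r c := by
    intro t
    induction t with
    | zero => intro r c _ _; rfl
    | succ t ih =>
      intro r c h1 h2
      have e1 : r + (t+1) = (r+t) + 1 := rfl
      have e2 : c + (t+1) = (c+t) + 1 := rfl
      rw [e1, e2, hdiag (r+t) (c+t) (by omega) (by omega)]
      exact ih r c (by omega) (by omega)
  intro r c hr hc
  rcases lt_or_ge c r with h | h
  · have h1 := hshift c (r - c) 0 (by omega) (by omega)
    rw [show r - c + c = r by omega, Nat.zero_add] at h1
    rw [h1]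
    obtain ⟨s, hs⟩ : ∃ s, r - c = s + 1 := ⟨r - c - 1, by omega⟩
    rw [hs]
    exact hz1 s (by omega)
  · rcases le_or_gt (c - r + p) q with h2 | h2
    · have h1 := hshift r 0 (c - r) (by omega) (by omega)
      rw [Nat.zero_add, show c - r + r = c by omega] at h1
      rw [h1]
      exact hseed (c - r) (by omega)
    · have h1 := hshift (q - c) r c (by omega) (by omega)
      rw [show c + (q - c) = q by omega] at h1
      rw [← h1]
      exact hz2 (r + (q - c)) (by omega)

end StatementTwoAux2
namespace StatementTwoAux3
open StatementTwoAux StatementTwoAux2 RepQ1 Module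

variable {k : Type u} [Field k]

lemma homSpace_lt_eq_bot (m n : ℕ) (hmn : m < n) :
    RepQ1.homSpace (E1 k m) (E1 k n) = ⊥ := by
  rw [eq_bot_iff]
  rintro ⟨f1, f2, f3⟩ hf
  obtain ⟨h13, h12, h23⟩ := (mem_homSpace_iff _).mp hf
  have e13 : f3 ∘ₗ piPlus k m = piPlus k n ∘ₗ f1 := h13
  have e12 : f2 ∘ₗ piMinus k m = piMinus k n ∘ₗ f1 := h12
  have e23 : f3 = f2 := by
    have h : f3 ∘ₗ (LinearMap.id : (Fin m → k) →ₗ[k] (Fin m → k)) = LinearMap.id ∘ₗ f2 := h23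
    exact LinearMap.ext fun x => LinearMap.congr_fun h x
  have E13 : ∀ (x : Fin (m+1) → k) (i : ℕ) (hi : i < n),
      f3 (piPlus k m x) ⟨i, hi⟩ = f1 x ⟨i, by omega⟩ :=
    fun x i hi => congrFun (LinearMap.congr_fun e13 x) ⟨i, hi⟩
  have E12 : ∀ (x : Fin (m+1) → k) (i : ℕ) (hi : i < n),
      f2 (piMinus k m x) ⟨i, hi⟩ = f1 x ⟨i + 1, by omega⟩ :=
    fun x i hi => congrFun (LinearMap.congr_fun e12 x) ⟨i, hi⟩
  set A : ℕ → ℕ → k := fun r c =>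
    if h : r < n + 1 ∧ c < m + 1 then f1 (Pi.single ⟨c, h.2⟩ 1) ⟨r, h.1⟩ else 0 with A_def
  have hval : ∀ r c (hr : r < n + 1) (hc : c < m + 1),
      A r c = f1 (Pi.single (⟨c, hc⟩ : Fin (m+1)) 1) (⟨r, hr⟩ : Fin (n+1)) := by
    intro r c hr hc
    simp only [A_def]
    rw [dif_pos ⟨hr, hc⟩]
  have hz1 : ∀ r, r < n → A (r+1) 0 = 0 := by
    intro r hr
    rw [hval (r+1) 0 (by omega) (by omega)]
    rw [← E12 (Pi.single ⟨0, by omega⟩ 1) r hr, piMinus_single_zero m (by omega)]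
    exact congrFun (map_zero f2) _
  have hz2 : ∀ r, r < n → A r m = 0 := by
    intro r hr
    rw [hval r m (by omega) (by omega)]
    rw [← E13 (Pi.single ⟨m, by omega⟩ 1) r hr, piPlus_single_last m (by omega)]
    exact congrFun (map_zero f3) _
  have hdiag : ∀ r c, r < n → c < m → A (r+1) (c+1) = A r c := by
    intro r c hr hc
    rw [hval (r+1) (c+1) (by omega) (by omega), hval r c (by omega) (by omega)]
    rw [← E12 (Pi.single ⟨c + 1, by omega⟩ 1) r hr, ← E13 (Pi.single ⟨c, by omega⟩ 1) r hr]
    rw [piMinus_single_mk m c hc (by omega), piPlus_single_mk m c hc (by omega), e23]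
    rfl
  have hzero := matrix_zero hz1 hz2 hdiag (fun e he => absurd he (by omega))
  have hf1 : f1 = 0 := by
    apply pi_ext_one
    intro j
    funext r
    have h0 := hzero r.val j.val (by omega) (by omega)
    rw [hval r.val j.val r.isLt j.isLt] at h0
    exact h0
  have hf2 : f2 = 0 := by
    have hsurj : Function.Surjective (piMinus k m) :=
      LinearMap.funLeft_surjective_of_injective k k _ (Fin.succ_injective m)
    apply LinearMap.ext
    intro y
    obtain ⟨x, rfl⟩ := hsurj y
    have h := LinearMap.congr_fun e12 x
    rw [hf1] at h
    exact h
  have hf3 : f3 = 0 := e23.trans hf2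
  simp only [Submodule.mem_bot, Prod.mk_eq_zero]
  exact ⟨hf1, hf2, hf3⟩

end StatementTwoAux3
namespace StatementTwoAux4
open StatementTwoAux StatementTwoAux2 RepQ1 Module

variable {k : Type u} [Field k]

/-- the band matrix entries -/
def Wfun (d : ℕ) (v : Fin (d+1) → k) (r c : ℕ) : k :=
  if h : r ≤ c ∧ c - r < d + 1 then v ⟨c - r, h.2⟩ else 0

lemma Wfun_diag (d : ℕ) (v : Fin (d+1) → k) (r c : ℕ) :
    Wfun d v (r+1) (c+1) = Wfun d v r c := by
  unfold Wfun
  by_cases h : r ≤ c ∧ c - r < d + 1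
  · rw [dif_pos h, dif_pos ⟨by omega, by omega⟩]
    congr 1
    exact Fin.ext (show c + 1 - (r + 1) = c - r by omega)
  · rw [dif_neg h, dif_neg (by omega)]

lemma Wfun_lo (d : ℕ) (v : Fin (d+1) → k) (r c : ℕ) (h : c < r) : Wfun d v r c = 0 :=
  dif_neg (by omega)

lemma Wfun_hi (d : ℕ) (v : Fin (d+1) → k) (r c : ℕ) (h : r + d < c) : Wfun d v r c = 0 :=
  dif_neg (by omega)

lemma Wfun_row0 (d : ℕ) (v : Fin (d+1) → k) (c : ℕ) (hc : c < d + 1) :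
    Wfun d v 0 c = v ⟨c, hc⟩ := by
  unfold Wfun
  rw [dif_pos ⟨Nat.zero_le _, by omega⟩]
  congr 1

variable (m n : ℕ)

/-- the candidate `f1` -/
def psi1 (v : Fin (n - m + 1) → k) : (Fin (n+1) → k) →ₗ[k] (Fin (m+1) → k) :=
  (Matrix.of fun (r : Fin (m+1)) (c : Fin (n+1)) => Wfun (n-m) v r.val c.val).mulVecLin

/-- the candidate `f2 = f3` -/
def psi2 (v : Fin (n - m + 1) → k) : (Fin n → k) →ₗ[k] (Fin m → k) :=
  (Matrix.of fun (r : Fin m) (c : Fin n) => Wfun (n-m) v r.val c.val).mulVecLin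

lemma psi1_single (v : Fin (n - m + 1) → k) (c : ℕ) (hc : c < n + 1) (r : Fin (m+1)) :
    psi1 m n v (Pi.single (⟨c, hc⟩ : Fin (n+1)) 1) r = Wfun (n-m) v r.val c := by
  simp [psi1, Matrix.mulVecLin, Matrix.mulVec_single]

lemma psi2_single (v : Fin (n - m + 1) → k) (c : ℕ) (hc : c < n) (r : Fin m) :
    psi2 m n v (Pi.single (⟨c, hc⟩ : Fin n) 1) r = Wfun (n-m) v r.val c := by
  simp [psi2, Matrix.mulVecLin, Matrix.mulVec_single]

lemma psi_mem (hmn : m < n) (v : Fin (n - m + 1) → k) :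
    ((psi1 m n v, psi2 m n v, psi2 m n v) :
      ((E1 k n).V1 →ₗ[k] (E1 k m).V1) × ((E1 k n).V2 →ₗ[k] (E1 k m).V2) ×
        ((E1 k n).V3 →ₗ[k] (E1 k m).V3)) ∈ RepQ1.homSpace (E1 k n) (E1 k m) := by
  rw [mem_homSpace_iff]
  refine ⟨?_, ?_, ?_⟩
  · show psi2 m n v ∘ₗ piPlus k n = piPlus k m ∘ₗ psi1 m n v
    apply pi_ext_one
    intro j
    rcases j with ⟨c, hc'⟩
    rw [LinearMap.comp_apply, LinearMap.comp_apply]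
    by_cases h : c < n
    · rw [piPlus_single_mk n c h hc']
      funext i
      rw [psi2_single m n v c h i]
      show _ = psi1 m n v (Pi.single ⟨c, hc'⟩ 1) i.castSucc
      rw [psi1_single m n v c hc']
      rfl
    · have hcn : c = n := by omega
      subst hcn
      rw [piPlus_single_last c hc', map_zero]
      funext i
      show (0 : Fin m → k) i = psi1 m c v (Pi.single ⟨c, hc'⟩ 1) i.castSucc
      rw [psi1_single m c v c hc']
      show (0 : Fin m → k) i = Wfun (c-m) v i.val c
      rw [Wfun_hi (c-m) v i.val c (by have := i.isLt; omega)]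
      rfl
  · show psi2 m n v ∘ₗ piMinus k n = piMinus k m ∘ₗ psi1 m n v
    apply pi_ext_one
    intro j
    rcases j with ⟨c, hc'⟩
    rw [LinearMap.comp_apply, LinearMap.comp_apply]
    rcases c with _ | c
    · rw [piMinus_single_zero n hc', map_zero]
      funext i
      show (0 : Fin m → k) i = psi1 m n v (Pi.single ⟨0, hc'⟩ 1) i.succ
      rw [psi1_single m n v 0 hc']
      show (0 : Fin m → k) i = Wfun (n-m) v (i.val + 1) 0
      rw [Wfun_lo (n-m) v (i.val + 1) 0 (by omega)]
      rfl
    · rw [piMinus_single_mk n c (by omega) hc']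
      funext i
      rw [psi2_single m n v c (by omega) i]
      show _ = psi1 m n v (Pi.single ⟨c+1, hc'⟩ 1) i.succ
      rw [psi1_single m n v (c+1) hc']
      show Wfun (n-m) v i.val c = Wfun (n-m) v (i.val + 1) (c + 1)
      rw [Wfun_diag]
  · show psi2 m n v ∘ₗ LinearMap.id = LinearMap.id ∘ₗ psi2 m n v
    rw [LinearMap.comp_id, LinearMap.id_comp]

end StatementTwoAux4
namespace StatementTwoAux5
open StatementTwoAux StatementTwoAux2 StatementTwoAux4 RepQ1 Module

variable {k : Type u} [Field k]

variable (m n : ℕ)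

/-- evaluation of the top-left corner band -/
def piMap (hmn : m < n) : ↥(RepQ1.homSpace (E1 k n) (E1 k m)) →ₗ[k] (Fin (n - m + 1) → k) where
  toFun f := fun c =>
    (f : ((E1 k n).V1 →ₗ[k] (E1 k m).V1) × ((E1 k n).V2 →ₗ[k] (E1 k m).V2) ×
      ((E1 k n).V3 →ₗ[k] (E1 k m).V3)).1
      (Pi.single (⟨c.val, by have := c.isLt; omega⟩ : Fin (n+1)) (1:k))
      (⟨0, by omega⟩ : Fin (m+1))
  map_add' f g := by
    funext c
    simp only [Submodule.coe_add, Prod.fst_add, LinearMap.add_apply]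
    rfl
  map_smul' a f := by
    funext c
    simp only [Submodule.coe_smul, Prod.smul_fst, LinearMap.smul_apply, RingHom.id_apply]
    rfl

lemma piMap_surjective (hmn : m < n) : Function.Surjective (piMap (k := k) m n hmn) := by
  intro v
  refine ⟨⟨(psi1 m n v, psi2 m n v, psi2 m n v), psi_mem m n hmn v⟩, ?_⟩
  funext c
  show psi1 m n v (Pi.single ⟨c.val, _⟩ 1) ⟨0, _⟩ = v c
  rw [psi1_single m n v c.val (by have := c.isLt; omega)]
  show Wfun (n-m) v 0 c.val = v c
  rw [Wfun_row0 (n-m) v c.val c.isLt]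

lemma piMap_injective (hmn : m < n) : Function.Injective (piMap (k := k) m n hmn) := by
  rw [← LinearMap.ker_eq_bot, eq_bot_iff]
  rintro ⟨⟨f1, f2, f3⟩, hf⟩ hker
  have hπ : ∀ (c : ℕ) (hc : c < n - m + 1),
      f1 (Pi.single (⟨c, by omega⟩ : Fin (n+1)) (1:k)) (⟨0, by omega⟩ : Fin (m+1)) = 0 := by
    intro c hc
    have := congrFun (LinearMap.mem_ker.mp hker) ⟨c, hc⟩
    exact this
  obtain ⟨h13, h12, h23⟩ := (mem_homSpace_iff _).mp hf
  have e13 : f3 ∘ₗ piPlus k n = piPlus k m ∘ₗ f1 := h13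
  have e12 : f2 ∘ₗ piMinus k n = piMinus k m ∘ₗ f1 := h12
  have e23 : f3 = f2 := by
    have h : f3 ∘ₗ (LinearMap.id : (Fin n → k) →ₗ[k] (Fin n → k)) = LinearMap.id ∘ₗ f2 := h23
    exact LinearMap.ext fun x => LinearMap.congr_fun h x
  have E13 : ∀ (x : Fin (n+1) → k) (i : ℕ) (hi : i < m),
      f3 (piPlus k n x) ⟨i, hi⟩ = f1 x ⟨i, by omega⟩ :=
    fun x i hi => congrFun (LinearMap.congr_fun e13 x) ⟨i, hi⟩
  have E12 : ∀ (x : Fin (n+1) → k) (i : ℕ) (hi : i < m),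
      f2 (piMinus k n x) ⟨i, hi⟩ = f1 x ⟨i + 1, by omega⟩ :=
    fun x i hi => congrFun (LinearMap.congr_fun e12 x) ⟨i, hi⟩
  set A : ℕ → ℕ → k := fun r c =>
    if h : r < m + 1 ∧ c < n + 1 then f1 (Pi.single ⟨c, h.2⟩ 1) ⟨r, h.1⟩ else 0 with A_def
  have hval : ∀ r c (hr : r < m + 1) (hc : c < n + 1),
      A r c = f1 (Pi.single (⟨c, hc⟩ : Fin (n+1)) 1) (⟨r, hr⟩ : Fin (m+1)) := by
    intro r c hr hc
    simp only [A_def]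
    rw [dif_pos ⟨hr, hc⟩]
  have hz1 : ∀ r, r < m → A (r+1) 0 = 0 := by
    intro r hr
    rw [hval (r+1) 0 (by omega) (by omega)]
    rw [← E12 (Pi.single ⟨0, by omega⟩ 1) r hr, piMinus_single_zero n (by omega)]
    exact congrFun (map_zero f2) _
  have hz2 : ∀ r, r < m → A r n = 0 := by
    intro r hr
    rw [hval r n (by omega) (by omega)]
    rw [← E13 (Pi.single ⟨n, by omega⟩ 1) r hr, piPlus_single_last n (by omega)]
    exact congrFun (map_zero f3) _
  have hB : ∀ r c (hr : r < m) (hc : c < n),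
      A r c = f2 (Pi.single (⟨c, hc⟩ : Fin n) 1) (⟨r, hr⟩ : Fin m) := by
    intro r c hr hc
    rw [hval r c (by omega) (by omega)]
    rw [← E13 (Pi.single ⟨c, by omega⟩ 1) r hr, piPlus_single_mk n c hc (by omega), e23]
    rfl
  have hdiag : ∀ r c, r < m → c < n → A (r+1) (c+1) = A r c := by
    intro r c hr hc
    rw [hval (r+1) (c+1) (by omega) (by omega), hB r c hr hc]
    rw [← E12 (Pi.single ⟨c + 1, by omega⟩ 1) r hr, piMinus_single_mk n c hc (by omega)]
  have hseed : ∀ e, m + e ≤ n → A 0 e = 0 := by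
    intro e he
    rw [hval 0 e (by omega) (by omega)]
    exact hπ e (by omega)
  have hzero := matrix_zero hz1 hz2 hdiag hseed
  have hf1 : f1 = 0 := by
    apply pi_ext_one
    intro j
    funext r
    have h0 := hzero r.val j.val (by omega) (by omega)
    rw [hval r.val j.val r.isLt j.isLt] at h0
    exact h0
  have hf2 : f2 = 0 := by
    apply pi_ext_one
    intro j
    funext r
    have h0 := hzero r.val j.val (by omega) (by omega)
    rw [hB r.val j.val r.isLt j.isLt] at h0
    exact h0
  have hf3 : f3 = 0 := e23.trans hf2
  simp only [Submodule.mem_bot, Submodule.mk_eq_zero, Prod.mk_eq_zero]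
  exact ⟨hf1, hf2, hf3⟩

lemma hom_ge (hmn : m < n) : RepQ1.hom (E1 k n) (E1 k m) = n - m + 1 := by
  rw [RepQ1.hom]
  have e := LinearEquiv.ofBijective (piMap (k := k) m n hmn)
    ⟨piMap_injective m n hmn, piMap_surjective m n hmn⟩
  rw [e.finrank_eq, Module.finrank_fin_fun]

lemma hom_lt (hmn : m < n) : RepQ1.hom (E1 k m) (E1 k n) = 0 := by
  rw [RepQ1.hom, StatementTwoAux3.homSpace_lt_eq_bot m n hmn, finrank_bot]

end StatementTwoAux5
/-- `hom`/`ext1` dimensions between `E₁^m` and `E₁^n` for `m < n`. -/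
theorem statement_2 (k : Type u) [Field k] [IsAlgClosed k] (m n : ℕ) (hmn : m < n) :
    RepQ1.hom (E1 k m) (E1 k n) = 0 ∧
    RepQ1.ext1 (E1 k m) (E1 k n) = n - m - 1 ∧
    RepQ1.hom (E1 k n) (E1 k m) = 1 + n - m ∧
    RepQ1.ext1 (E1 k n) (E1 k m) = 0 := by
  have hom1 : RepQ1.hom (E1 k m) (E1 k n) = 0 := StatementTwoAux5.hom_lt m n hmn
  have hom2 : RepQ1.hom (E1 k n) (E1 k m) = n - m + 1 := StatementTwoAux5.hom_ge m n hmn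
  have hkey1 := StatementTwoAux.hom_add_eq (E1 k m) (E1 k n)
  have hkey2 := StatementTwoAux.hom_add_eq (E1 k n) (E1 k m)
  have hP1 : finrank k (((E1 k m).V1 →ₗ[k] (E1 k n).V1) × ((E1 k m).V2 →ₗ[k] (E1 k n).V2) ×
      ((E1 k m).V3 →ₗ[k] (E1 k n).V3)) = (m+1)*(n+1) + (m*n + m*n) := by
    rw [Module.finrank_prod, Module.finrank_prod]
    have a1 : finrank k ((E1 k m).V1 →ₗ[k] (E1 k n).V1) = (m+1)*(n+1) :=
      StatementTwoAux.flin (m+1) (n+1)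
    have a2 : finrank k ((E1 k m).V2 →ₗ[k] (E1 k n).V2) = m*n := StatementTwoAux.flin m n
    have a3 : finrank k ((E1 k m).V3 →ₗ[k] (E1 k n).V3) = m*n := StatementTwoAux.flin m n
    rw [a1, a2, a3]
  have hQ1 : finrank k (((E1 k m).V1 →ₗ[k] (E1 k n).V3) × ((E1 k m).V1 →ₗ[k] (E1 k n).V2) ×
      ((E1 k m).V2 →ₗ[k] (E1 k n).V3)) = (m+1)*n + ((m+1)*n + m*n) := by
    rw [Module.finrank_prod, Module.finrank_prod]
    have a1 : finrank k ((E1 k m).V1 →ₗ[k] (E1 k n).V3) = (m+1)*n :=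
      StatementTwoAux.flin (m+1) n
    have a2 : finrank k ((E1 k m).V1 →ₗ[k] (E1 k n).V2) = (m+1)*n :=
      StatementTwoAux.flin (m+1) n
    have a3 : finrank k ((E1 k m).V2 →ₗ[k] (E1 k n).V3) = m*n := StatementTwoAux.flin m n
    rw [a1, a2, a3]
  have hP2 : finrank k (((E1 k n).V1 →ₗ[k] (E1 k m).V1) × ((E1 k n).V2 →ₗ[k] (E1 k m).V2) ×
      ((E1 k n).V3 →ₗ[k] (E1 k m).V3)) = (n+1)*(m+1) + (n*m + n*m) := by
    rw [Module.finrank_prod, Module.finrank_prod]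
    have a1 : finrank k ((E1 k n).V1 →ₗ[k] (E1 k m).V1) = (n+1)*(m+1) :=
      StatementTwoAux.flin (n+1) (m+1)
    have a2 : finrank k ((E1 k n).V2 →ₗ[k] (E1 k m).V2) = n*m := StatementTwoAux.flin n m
    have a3 : finrank k ((E1 k n).V3 →ₗ[k] (E1 k m).V3) = n*m := StatementTwoAux.flin n m
    rw [a1, a2, a3]
  have hQ2 : finrank k (((E1 k n).V1 →ₗ[k] (E1 k m).V3) × ((E1 k n).V1 →ₗ[k] (E1 k m).V2) ×
      ((E1 k n).V2 →ₗ[k] (E1 k m).V3)) = (n+1)*m + ((n+1)*m + n*m) := by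
    rw [Module.finrank_prod, Module.finrank_prod]
    have a1 : finrank k ((E1 k n).V1 →ₗ[k] (E1 k m).V3) = (n+1)*m :=
      StatementTwoAux.flin (n+1) m
    have a2 : finrank k ((E1 k n).V1 →ₗ[k] (E1 k m).V2) = (n+1)*m :=
      StatementTwoAux.flin (n+1) m
    have a3 : finrank k ((E1 k n).V2 →ₗ[k] (E1 k m).V3) = n*m := StatementTwoAux.flin n m
    rw [a1, a2, a3]
  rw [hom1, hP1, hQ1] at hkey1
  rw [hom2, hP2, hQ2] at hkey2
  have hx1 : (m+1)*(n+1) = m*n + m + n + 1 := by ring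
  have hx2 : (m+1)*n = m*n + n := by ring
  have hx3 : (n+1)*(m+1) = m*n + m + n + 1 := by ring
  have hx4 : (n+1)*m = m*n + m := by ring
  have hx5 : n*m = m*n := by ring
  rw [hx1, hx2] at hkey1
  rw [hx3, hx4, hx5] at hkey2
  generalize hK : m * n = K at hkey1 hkey2
  exact ⟨hom1, by omega, by omega, by omega⟩
end
end

section
/- For all natural numbers m, n ≥ 0: hom(E_1^m, E_2^n) = 0, ext1(E_1^m, E_2^n) = n + m + 2, hom(E_2^n, E_1^m) = n + m, and ext1(E_2^n, E_1^m) = 0. -/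
noncomputable section

open Module

universe u

variable (k : Type u) [Field k]

namespace Statement3Aux

open Module RepQ1

variable {k : Type u} [Field k]

lemma jPlus_single (m : ℕ) (i : Fin m) :
    jPlus k m (Pi.single i 1) = Pi.single i.castSucc 1 := by
  funext l
  induction l using Fin.lastCases with
  | last => simp [jPlus, Pi.single_apply, (Fin.castSucc_lt_last i).ne']
  | cast j => simp [jPlus, Pi.single_apply, Fin.castSucc_inj]

lemma jMinus_single (m : ℕ) (i : Fin m) :
    jMinus k m (Pi.single i 1) = Pi.single i.succ 1 := by
  funext l
  induction l using Fin.cases with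
  | zero => simp [jMinus, Pi.single_apply, (Fin.succ_ne_zero i).symm]
  | succ j => simp [jMinus, Pi.single_apply, Fin.succ_inj]

lemma piPlus_jPlus (m : ℕ) (c : Fin m → k) : piPlus k m (jPlus k m c) = c := by
  funext l; simp [piPlus, jPlus, LinearMap.funLeft_apply]

lemma piMinus_jMinus (m : ℕ) (c : Fin m → k) : piMinus k m (jMinus k m c) = c := by
  funext l; simp [piMinus, jMinus, LinearMap.funLeft_apply]

lemma jMinus_injective (m : ℕ) : Function.Injective (jMinus k m) := by
  intro a b h
  have := congrArg (piMinus k m) h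
  simpa [piMinus_jMinus] using this

lemma piPlus_single_castSucc (m : ℕ) (i : Fin m) :
    piPlus k m (Pi.single i.castSucc 1) = Pi.single i 1 := by
  funext l; simp [piPlus, LinearMap.funLeft_apply, Pi.single_apply, Fin.castSucc_inj]

lemma piMinus_single_zero (m : ℕ) :
    piMinus k m (Pi.single (0 : Fin (m + 1)) (1 : k)) = 0 := by
  funext l; simp [piMinus, LinearMap.funLeft_apply, Pi.single_apply, Fin.succ_ne_zero]

lemma piMinus_single_succ (m : ℕ) (i : Fin m) :
    piMinus k m (Pi.single i.succ 1) = Pi.single i 1 := by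
  funext l; simp [piMinus, LinearMap.funLeft_apply, Pi.single_apply, Fin.succ_inj]

def mkMap {N : ℕ} {M : Type u} [AddCommGroup M] [Module k M] (c : Fin N → M) :
    (Fin N → k) →ₗ[k] M where
  toFun a := ∑ l, a l • c l
  map_add' a b := by simp [add_smul, Finset.sum_add_distrib]
  map_smul' r a := by simp [mul_smul, Finset.smul_sum]

lemma mkMap_single {N : ℕ} {M : Type u} [AddCommGroup M] [Module k M] (c : Fin N → M)
    (i : Fin N) : mkMap (k := k) c (Pi.single i 1) = c i := by
  simp [mkMap, Pi.single_apply, ite_smul]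

lemma hom_vanish (m n : ℕ) (f1 : (Fin (m + 1) → k) →ₗ[k] (Fin n → k))
    (f2 f3 : (Fin m → k) →ₗ[k] (Fin (n + 1) → k))
    (h13 : f3 ∘ₗ piPlus k m = jPlus k n ∘ₗ f1)
    (h12 : f2 ∘ₗ piMinus k m = jMinus k n ∘ₗ f1)
    (h23 : f3 = f2) :
    f1 = 0 ∧ f2 = 0 ∧ f3 = 0 := by
  subst h23
  have H13 : ∀ x, f3 (piPlus k m x) = jPlus k n (f1 x) := fun x => DFunLike.congr_fun h13 x
  have H12 : ∀ x, f3 (piMinus k m x) = jMinus k n (f1 x) := fun x => DFunLike.congr_fun h12 x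
  have key : ∀ j : Fin (m + 1), f1 (Pi.single j 1) = 0 := by
    intro j
    induction j using Fin.induction with
    | zero =>
      apply jMinus_injective n
      rw [← H12 (Pi.single 0 1), piMinus_single_zero, map_zero, map_zero]
    | succ i ih =>
      apply jMinus_injective n
      have e1 : jMinus k n (f1 (Pi.single i.succ 1)) = f3 (Pi.single i 1) := by
        rw [← H12, piMinus_single_succ]
      have e2 : f3 (Pi.single i 1) = 0 := by
        rw [← piPlus_single_castSucc m i, H13, ih, map_zero]
      rw [e1, e2, map_zero]
  have hf1 : f1 = 0 := by
    apply Basis.ext (Pi.basisFun k (Fin (m + 1)))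
    intro j
    rw [Pi.basisFun_apply]
    simp only [LinearMap.zero_apply]
    exact key j
  have hf3 : f3 = 0 := by
    apply Basis.ext (Pi.basisFun k (Fin m))
    intro j
    rw [Pi.basisFun_apply, ← piMinus_single_succ m j, H12, key, map_zero]
    simp
  exact ⟨hf1, hf3, hf3⟩

lemma homSpace_E1_E2 (m n : ℕ) : RepQ1.homSpace (E1 k m) (E2 k n) = ⊥ := by
  rw [Submodule.eq_bot_iff]
  rintro ⟨f1, f2, f3⟩ ⟨h13, h12, h23⟩
  have h23' : f3 = f2 := by
    ext x; exact DFunLike.congr_fun h23 x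
  obtain ⟨e1, e2, e3⟩ := hom_vanish m n f1 f2 f3 h13 h12 h23'
  exact Prod.ext e1 (Prod.ext e2 e3)

def Gseq (m n : ℕ) (u v : (Fin n → k) →ₗ[k] (Fin m → k))
    (w : (Fin (n + 1) → k) →ₗ[k] (Fin m → k)) : ℕ → (Fin m → k)
  | 0 => 0
  | (i + 1) =>
    if h : i < n then
      v (Pi.single ⟨i, h⟩ 1) + piMinus k m (jPlus k m
        (Gseq m n u v w i + w (Pi.single (Fin.castSucc ⟨i, h⟩) 1) - u (Pi.single ⟨i, h⟩ 1)))
    else 0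

lemma phi_surj_aux (m n : ℕ) (u v : (Fin n → k) →ₗ[k] (Fin m → k))
    (w : (Fin (n + 1) → k) →ₗ[k] (Fin m → k)) :
    ∃ (g1 : (Fin n → k) →ₗ[k] (Fin (m + 1) → k))
      (g2 g3 : (Fin (n + 1) → k) →ₗ[k] (Fin m → k)),
      g3 ∘ₗ jPlus k n - piPlus k m ∘ₗ g1 = u ∧
      g2 ∘ₗ jMinus k n - piMinus k m ∘ₗ g1 = v ∧
      g3 ∘ₗ LinearMap.id - LinearMap.id ∘ₗ g2 = w := by
  set G := Gseq m n u v w with hG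
  refine ⟨mkMap (k := k) (fun i : Fin n =>
      jPlus k m (G i.val + w (Pi.single i.castSucc 1) - u (Pi.single i 1))),
    mkMap (k := k) (fun l : Fin (n + 1) => G l.val),
    mkMap (k := k) (fun l : Fin (n + 1) => G l.val) + w, ?_, ?_, ?_⟩
  · apply Basis.ext (Pi.basisFun k (Fin n))
    intro i
    rw [Pi.basisFun_apply]
    simp only [LinearMap.sub_apply, LinearMap.comp_apply, LinearMap.add_apply]
    rw [jPlus_single, mkMap_single, mkMap_single, piPlus_jPlus]
    simp only [Fin.coe_castSucc]
    abel
  · apply Basis.ext (Pi.basisFun k (Fin n))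
    intro i
    rw [Pi.basisFun_apply]
    simp only [LinearMap.sub_apply, LinearMap.comp_apply]
    rw [jMinus_single, mkMap_single, mkMap_single]
    have : G (i.succ.val) = v (Pi.single i 1) + piMinus k m (jPlus k m
        (G i.val + w (Pi.single i.castSucc 1) - u (Pi.single i 1))) := by
      rw [Fin.val_succ, hG]
      show Gseq m n u v w (i.val + 1) = _
      rw [Gseq, dif_pos i.isLt]
    rw [this]
    abel
  · rw [LinearMap.comp_id, LinearMap.id_comp]
    simp

lemma phi_E2_E1_surj (m n : ℕ) :
    LinearMap.range (RepQ1.phi (E2 k n) (E1 k m)) = ⊤ := by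
  rw [LinearMap.range_eq_top]
  rintro ⟨u, v, w⟩
  obtain ⟨g1, g2, g3, h1, h2, h3⟩ := phi_surj_aux m n u v w
  exact ⟨(g1, g2, g3), Prod.ext h1 (Prod.ext h2 h3)⟩

lemma homSpace_eq_ker (r r' : RepQ1 k) :
    RepQ1.homSpace r r' = LinearMap.ker (RepQ1.phi r r') := by
  ext f
  have hmem : f ∈ RepQ1.homSpace r r' ↔
      (f.2.2 ∘ₗ r.r13 = r'.r13 ∘ₗ f.1 ∧ f.2.1 ∘ₗ r.r12 = r'.r12 ∘ₗ f.1 ∧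
        f.2.2 ∘ₗ r.r23 = r'.r23 ∘ₗ f.2.1) := Iff.rfl
  rw [hmem, LinearMap.mem_ker]
  simp [RepQ1.phi, Prod.ext_iff, sub_eq_zero]

lemma dims (r r' : RepQ1 k) :
    RepQ1.hom r r' + (finrank k (r.V1 →ₗ[k] r'.V3) + finrank k (r.V1 →ₗ[k] r'.V2)
      + finrank k (r.V2 →ₗ[k] r'.V3))
    = RepQ1.ext1 r r' + (finrank k (r.V1 →ₗ[k] r'.V1) + finrank k (r.V2 →ₗ[k] r'.V2)
      + finrank k (r.V3 →ₗ[k] r'.V3)) := by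
  have hd := LinearMap.finrank_range_add_finrank_ker (RepQ1.phi r r')
  have hc := Submodule.finrank_quotient_add_finrank (LinearMap.range (RepQ1.phi r r'))
  have hdom : finrank k ((r.V1 →ₗ[k] r'.V1) × (r.V2 →ₗ[k] r'.V2) × (r.V3 →ₗ[k] r'.V3))
      = finrank k (r.V1 →ₗ[k] r'.V1) + (finrank k (r.V2 →ₗ[k] r'.V2)
        + finrank k (r.V3 →ₗ[k] r'.V3)) := by
    rw [Module.finrank_prod, Module.finrank_prod]
  have hcod : finrank k ((r.V1 →ₗ[k] r'.V3) × (r.V1 →ₗ[k] r'.V2) × (r.V2 →ₗ[k] r'.V3))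
      = finrank k (r.V1 →ₗ[k] r'.V3) + (finrank k (r.V1 →ₗ[k] r'.V2)
        + finrank k (r.V2 →ₗ[k] r'.V3)) := by
    rw [Module.finrank_prod, Module.finrank_prod]
  have hker : RepQ1.hom r r' = finrank k (LinearMap.ker (RepQ1.phi r r')) := by
    rw [RepQ1.hom, homSpace_eq_ker]
  have hq : RepQ1.ext1 r r'
      = finrank k (((r.V1 →ₗ[k] r'.V3) × (r.V1 →ₗ[k] r'.V2) × (r.V2 →ₗ[k] r'.V3)) ⧸
          LinearMap.range (RepQ1.phi r r')) := rfl
  omega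

end Statement3Aux

/-- `hom`/`ext1` dimensions between `E₁^m` and `E₂^n`. -/
theorem statement_3 (k : Type u) [Field k] [IsAlgClosed k] (m n : ℕ) :
    RepQ1.hom (E1 k m) (E2 k n) = 0 ∧
    RepQ1.ext1 (E1 k m) (E2 k n) = n + m + 2 ∧
    RepQ1.hom (E2 k n) (E1 k m) = n + m ∧
    RepQ1.ext1 (E2 k n) (E1 k m) = 0 := by
  open Statement3Aux Module in
  have fr : ∀ (a b : ℕ), finrank k ((Fin a → k) →ₗ[k] (Fin b → k)) = a * b := fun a b => by
    rw [Module.finrank_linearMap, Module.finrank_fin_fun, Module.finrank_fin_fun]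
  have h1 : RepQ1.hom (E1 k m) (E2 k n) = 0 := by
    rw [RepQ1.hom, homSpace_E1_E2]
    exact finrank_bot k _
  have h4 : RepQ1.ext1 (E2 k n) (E1 k m) = 0 := by
    have hc := Submodule.finrank_quotient_add_finrank
      (LinearMap.range (RepQ1.phi (E2 k n) (E1 k m)))
    have hr : finrank k (LinearMap.range (RepQ1.phi (E2 k n) (E1 k m)))
        = finrank k ((((E2 k n).V1 →ₗ[k] (E1 k m).V3) × ((E2 k n).V1 →ₗ[k] (E1 k m).V2)
          × ((E2 k n).V2 →ₗ[k] (E1 k m).V3))) := by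
      rw [phi_E2_E1_surj]
      exact finrank_top k _
    have hq : RepQ1.ext1 (E2 k n) (E1 k m)
        = finrank k ((((E2 k n).V1 →ₗ[k] (E1 k m).V3) × ((E2 k n).V1 →ₗ[k] (E1 k m).V2)
          × ((E2 k n).V2 →ₗ[k] (E1 k m).V3)) ⧸
          LinearMap.range (RepQ1.phi (E2 k n) (E1 k m))) := rfl
    omega
  have Hd1 := dims (E1 k m) (E2 k n)
  have Hd2 := dims (E2 k n) (E1 k m)
  have c1 : finrank k ((E1 k m).V1 →ₗ[k] (E2 k n).V3) = (m + 1) * (n + 1) := fr (m + 1) (n + 1)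
  have c2 : finrank k ((E1 k m).V1 →ₗ[k] (E2 k n).V2) = (m + 1) * (n + 1) := fr (m + 1) (n + 1)
  have c3 : finrank k ((E1 k m).V2 →ₗ[k] (E2 k n).V3) = m * (n + 1) := fr m (n + 1)
  have c4 : finrank k ((E1 k m).V1 →ₗ[k] (E2 k n).V1) = (m + 1) * n := fr (m + 1) n
  have c5 : finrank k ((E1 k m).V2 →ₗ[k] (E2 k n).V2) = m * (n + 1) := fr m (n + 1)
  have c6 : finrank k ((E1 k m).V3 →ₗ[k] (E2 k n).V3) = m * (n + 1) := fr m (n + 1)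
  have d1 : finrank k ((E2 k n).V1 →ₗ[k] (E1 k m).V3) = n * m := fr n m
  have d2 : finrank k ((E2 k n).V1 →ₗ[k] (E1 k m).V2) = n * m := fr n m
  have d3 : finrank k ((E2 k n).V2 →ₗ[k] (E1 k m).V3) = (n + 1) * m := fr (n + 1) m
  have d4 : finrank k ((E2 k n).V1 →ₗ[k] (E1 k m).V1) = n * (m + 1) := fr n (m + 1)
  have d5 : finrank k ((E2 k n).V2 →ₗ[k] (E1 k m).V2) = (n + 1) * m := fr (n + 1) m
  have d6 : finrank k ((E2 k n).V3 →ₗ[k] (E1 k m).V3) = (n + 1) * m := fr (n + 1) m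
  rw [c1, c2, c3, c4, c5, c6, h1] at Hd1
  rw [d1, d2, d3, d4, d5, d6, h4] at Hd2
  have h2 : RepQ1.ext1 (E1 k m) (E2 k n) = n + m + 2 := by
    have expand : (m + 1) * (n + 1) + ((m + 1) * (n + 1) + m * (n + 1))
        = ((m + 1) * n + (m * (n + 1) + m * (n + 1))) + (n + m + 2) := by ring
    linarith [Hd1, expand]
  have h3 : RepQ1.hom (E2 k n) (E1 k m) = n + m := by
    have expand : n * (m + 1) + ((n + 1) * m + (n + 1) * m)
        = (n * m + (n * m + (n + 1) * m)) + (n + m) := by ring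
    linarith [Hd2, expand]
  exact ⟨h1, h2, h3, h4⟩
end
end

section
/- For all natural numbers m, n with 0 ≤ m ≤ n: hom(E_1^m, E_4^n) = 0, ext1(E_1^m, E_4^n) = n − m, hom(E_4^n, E_1^m) = 1 + n − m, and ext1(E_4^n, E_1^m) = 0. For all natural numbers m, n with 0 ≤ n < m: hom(E_1^m, E_4^n) = m − n, ext1(E_1^m, E_4^n) = 0, hom(E_4^n, E_1^m) = 0, and ext1(E_4^n, E_1^m) = m − n − 1. -/
noncomputable section

open Module

universe u

variable (k : Type u) [Field k]

/- ===================== Auxiliary development ===================== -/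

section AuxDev

variable {k : Type u} [Field k]

lemma aux_key1 {p : ℕ} (M : ℕ → ℕ → k)
    (h1 : ∀ i < p, ∀ j, M (i+1) (j+1) = M i j)
    (h2 : ∀ i < p, M (i+1) 0 = 0) :
    ∀ i, i ≤ p → ∀ j, M i j = if i ≤ j then M 0 (j - i) else 0 := by
  intro i
  induction i with
  | zero => intro _ j; simp
  | succ i ih =>
    intro hi j
    cases j with
    | zero => rw [h2 i (by omega), if_neg (by omega)]
    | succ j =>
      rw [h1 i (by omega) j, ih (by omega) j]
      by_cases hij : i ≤ j
      · rw [if_pos hij, if_pos (by omega), Nat.succ_sub_succ]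
      · rw [if_neg hij, if_neg (by omega)]

lemma aux_funLeft_castSucc_single (m j : ℕ) (hj : j < m) (hj' : j < m + 1) :
    LinearMap.funLeft k k Fin.castSucc (Pi.single (⟨j, hj'⟩ : Fin (m+1)) (1:k))
      = Pi.single (⟨j, hj⟩ : Fin m) 1 := by
  funext l
  simp [LinearMap.funLeft_apply, Pi.single_apply, Fin.ext_iff]

lemma aux_funLeft_castSucc_single_zero (m j : ℕ) (hj' : j < m + 1) (hj : ¬ j < m) :
    LinearMap.funLeft k k Fin.castSucc (Pi.single (⟨j, hj'⟩ : Fin (m+1)) (1:k)) = 0 := by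
  funext l
  have hl := l.isLt
  simp only [LinearMap.funLeft_apply, Pi.single_apply, Fin.ext_iff, Fin.coe_castSucc,
    Pi.zero_apply]
  rw [if_neg (by omega)]

lemma aux_funLeft_succ_single (m j : ℕ) (hj : j < m) (hj' : j + 1 < m + 1) :
    LinearMap.funLeft k k Fin.succ (Pi.single (⟨j+1, hj'⟩ : Fin (m+1)) (1:k))
      = Pi.single (⟨j, hj⟩ : Fin m) 1 := by
  funext l
  simp [LinearMap.funLeft_apply, Pi.single_apply, Fin.ext_iff]

lemma aux_funLeft_succ_single_zero (m : ℕ) :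
    LinearMap.funLeft k k Fin.succ (Pi.single (⟨0, Nat.succ_pos m⟩ : Fin (m+1)) (1:k)) = 0 := by
  funext l
  simp only [LinearMap.funLeft_apply, Pi.single_apply, Fin.ext_iff, Fin.val_succ, Pi.zero_apply]
  rw [if_neg (by omega)]

/-- The matrix of a linear map between coordinate spaces, as a totalized function `ℕ → ℕ → k`. -/
def matOf {a b : ℕ} (f : (Fin b → k) →ₗ[k] (Fin a → k)) : ℕ → ℕ → k :=
  fun i j => if h : i < a ∧ j < b then f (Pi.single ⟨j, h.2⟩ 1) ⟨i, h.1⟩ else 0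

lemma matOf_pos {a b : ℕ} (f : (Fin b → k) →ₗ[k] (Fin a → k)) {i j : ℕ}
    (h1 : i < a) (h2 : j < b) :
    matOf f i j = f (Pi.single ⟨j, h2⟩ 1) ⟨i, h1⟩ := dif_pos ⟨h1, h2⟩

lemma matOf_neg {a b : ℕ} (f : (Fin b → k) →ₗ[k] (Fin a → k)) {i j : ℕ}
    (h : ¬ (i < a ∧ j < b)) :
    matOf f i j = 0 := dif_neg h

/-- The "band matrix" linear map determined by diagonal values `c`. -/
def shiftMap (a b d : ℕ) (hcond : ∀ t, t < d → b + t ≤ a) (c : Fin d → k) :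
    (Fin a → k) →ₗ[k] (Fin b → k) :=
  ∑ t : Fin d, c t • LinearMap.funLeft k k
    (fun i : Fin b =>
      (⟨(i : ℕ) + t, by have h1 := i.isLt; have h2 := hcond t t.isLt; omega⟩ : Fin a))

lemma shiftMap_apply (a b d : ℕ) (hcond : ∀ t, t < d → b + t ≤ a) (c : Fin d → k)
    (x : Fin a → k) (i : Fin b) :
    shiftMap a b d hcond c x i
      = ∑ t : Fin d, c t * x ⟨(i : ℕ) + t,
          by have h1 := i.isLt; have h2 := hcond t t.isLt; omega⟩ := by
  simp [shiftMap, LinearMap.sum_apply, Finset.sum_apply, LinearMap.funLeft_apply]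

lemma shiftMap_add (a b d : ℕ) (hcond : ∀ t, t < d → b + t ≤ a) (c c' : Fin d → k) :
    shiftMap a b d hcond (c + c') = shiftMap a b d hcond c + shiftMap a b d hcond c' := by
  simp [shiftMap, add_smul, Finset.sum_add_distrib]

lemma shiftMap_smul (a b d : ℕ) (hcond : ∀ t, t < d → b + t ≤ a) (r : k) (c : Fin d → k) :
    shiftMap a b d hcond (r • c) = r • shiftMap a b d hcond c := by
  simp [shiftMap, smul_smul, Finset.smul_sum]

lemma shiftMap_single (a b d : ℕ) (hcond : ∀ t, t < d → b + t ≤ a) (c : Fin d → k)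
    (j : Fin a) (i : Fin b) :
    shiftMap a b d hcond c (Pi.single j 1) i
      = if h : (i : ℕ) ≤ (j : ℕ) ∧ (j : ℕ) - (i : ℕ) < d then c ⟨(j : ℕ) - (i : ℕ), h.2⟩
        else 0 := by
  rw [shiftMap_apply]
  by_cases h : (i : ℕ) ≤ (j : ℕ) ∧ (j : ℕ) - (i : ℕ) < d
  · rw [dif_pos h]
    rw [Finset.sum_eq_single (⟨(j : ℕ) - (i : ℕ), h.2⟩ : Fin d)]
    · have e : (⟨(i:ℕ) + ((⟨(j : ℕ) - (i : ℕ), h.2⟩ : Fin d) : ℕ),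
          by have h1 := i.isLt; have h2 := hcond _ h.2; simp; omega⟩ : Fin a) = j := by
        apply Fin.ext; simp; omega
      rw [e, Pi.single_eq_same, mul_one]
    · intro t _ ht
      rw [Pi.single_eq_of_ne, mul_zero]
      intro hcc
      apply ht
      apply Fin.ext
      simp only [Fin.ext_iff] at hcc
      try simp at hcc ⊢
      omega
    · intro h'; exact absurd (Finset.mem_univ _) h'
  · rw [dif_neg h]
    apply Finset.sum_eq_zero
    intro t _
    rw [Pi.single_eq_of_ne, mul_zero]
    intro hcc
    simp only [Fin.ext_iff] at hcc
    have ht := t.isLt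
    try simp at hcc
    omega

lemma shiftMap_eval0 (a b d : ℕ) (hcond : ∀ t, t < d → b + t ≤ a) (c : Fin d → k)
    (t : Fin d) (hb : 0 < b) (hta : (t : ℕ) < a) :
    shiftMap a b d hcond c (Pi.single (⟨(t : ℕ), hta⟩ : Fin a) 1) (⟨0, hb⟩ : Fin b) = c t := by
  rw [shiftMap_single]
  have hP : ((⟨0, hb⟩ : Fin b) : ℕ) ≤ ((⟨(t : ℕ), hta⟩ : Fin a) : ℕ) ∧
      ((⟨(t : ℕ), hta⟩ : Fin a) : ℕ) - ((⟨0, hb⟩ : Fin b) : ℕ) < d := by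
    refine ⟨Nat.zero_le _, ?_⟩
    show (t : ℕ) - 0 < d
    have := t.isLt; omega
  rw [dif_pos hP]
  exact congrArg c (Fin.ext (show (t : ℕ) - 0 = (t : ℕ) by omega))

lemma mem_homSpace_iff {ρ ρ' : RepQ1 k} (f : (ρ.V1 →ₗ[k] ρ'.V1) × (ρ.V2 →ₗ[k] ρ'.V2) ×
    (ρ.V3 →ₗ[k] ρ'.V3)) :
    f ∈ RepQ1.homSpace ρ ρ' ↔
      (f.2.2 ∘ₗ ρ.r13 = ρ'.r13 ∘ₗ f.1 ∧ f.2.1 ∘ₗ ρ.r12 = ρ'.r12 ∘ₗ f.1 ∧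
        f.2.2 ∘ₗ ρ.r23 = ρ'.r23 ∘ₗ f.2.1) := Iff.rfl

lemma homSpace_eq_ker (ρ ρ' : RepQ1 k) :
    RepQ1.homSpace ρ ρ' = LinearMap.ker (RepQ1.phi ρ ρ') := by
  ext f
  rw [mem_homSpace_iff, LinearMap.mem_ker,
    show RepQ1.phi ρ ρ' f = (f.2.2 ∘ₗ ρ.r13 - ρ'.r13 ∘ₗ f.1, f.2.1 ∘ₗ ρ.r12 - ρ'.r12 ∘ₗ f.1,
      f.2.2 ∘ₗ ρ.r23 - ρ'.r23 ∘ₗ f.2.1) from rfl, Prod.ext_iff, Prod.ext_iff]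
  simp [sub_eq_zero]

lemma aux_ext1_add (ρ ρ' : RepQ1 k) :
    RepQ1.ext1 ρ ρ'
      + Module.finrank k ((ρ.V1 →ₗ[k] ρ'.V1) × (ρ.V2 →ₗ[k] ρ'.V2) × (ρ.V3 →ₗ[k] ρ'.V3))
    = RepQ1.hom ρ ρ'
      + Module.finrank k ((ρ.V1 →ₗ[k] ρ'.V3) × (ρ.V1 →ₗ[k] ρ'.V2) × (ρ.V2 →ₗ[k] ρ'.V3)) := by
  have h1 := Submodule.finrank_quotient_add_finrank (LinearMap.range (RepQ1.phi ρ ρ'))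
  have h2 := LinearMap.finrank_range_add_finrank_ker (RepQ1.phi ρ ρ')
  have h3 : RepQ1.hom ρ ρ' = Module.finrank k (LinearMap.ker (RepQ1.phi ρ ρ')) :=
    congrArg (fun S : Submodule k _ => Module.finrank k (↥S)) (homSpace_eq_ker ρ ρ')
  have h6 : RepQ1.ext1 ρ ρ'
      = Module.finrank k (((ρ.V1 →ₗ[k] ρ'.V3) × (ρ.V1 →ₗ[k] ρ'.V2) × (ρ.V2 →ₗ[k] ρ'.V3)) ⧸
          LinearMap.range (RepQ1.phi ρ ρ')) := rfl
  omega

end AuxDev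

section AuxDev2

/-- The solutions for `Hom(E1^m, E4^n)`. -/
def psiA (k : Type u) [Field k] (m n : ℕ) : (Fin (m - n) → k) →ₗ[k]
    (((Fin (m+1) → k) →ₗ[k] (Fin (n+1) → k)) ×
     ((Fin m → k) →ₗ[k] (Fin (n+1) → k)) ×
     ((Fin m → k) →ₗ[k] (Fin n → k))) where
  toFun c :=
    (shiftMap m (n+1) (m-n) (fun t ht => by omega) c ∘ₗ piMinus k m,
     shiftMap m (n+1) (m-n) (fun t ht => by omega) c,
     piMinus k n ∘ₗ shiftMap m (n+1) (m-n) (fun t ht => by omega) c)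
  map_add' c c' := by
    simp only [shiftMap_add, LinearMap.add_comp, LinearMap.comp_add, Prod.mk_add_mk]
  map_smul' r c := by
    simp only [shiftMap_smul, LinearMap.smul_comp, LinearMap.comp_smul, Prod.smul_mk,
      RingHom.id_apply]

lemma range_psiA (k : Type u) [Field k] (m n : ℕ) :
    LinearMap.range (psiA k m n) = RepQ1.homSpace (E1 k m) (E4 k n) := by
  apply le_antisymm
  · rintro x ⟨c, rfl⟩
    apply (mem_homSpace_iff (ρ := E1 k m) (ρ' := E4 k n) _).mpr
    refine ⟨?_, ?_, ?_⟩
    · show (piMinus k n ∘ₗ shiftMap m (n+1) (m-n) (fun t ht => by omega) c) ∘ₗ piPlus k m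
        = piPlus k n ∘ₗ (shiftMap m (n+1) (m-n) (fun t ht => by omega) c ∘ₗ piMinus k m)
      apply LinearMap.ext; intro v
      funext i
      simp only [LinearMap.comp_apply, piPlus, piMinus, LinearMap.funLeft_apply, shiftMap_apply]
      refine Finset.sum_congr rfl fun t _ => ?_
      congr 1
      apply congrArg
      apply Fin.ext
      simp
      omega
    · show shiftMap m (n+1) (m-n) (fun t ht => by omega) c ∘ₗ piMinus k m
        = LinearMap.id ∘ₗ (shiftMap m (n+1) (m-n) (fun t ht => by omega) c ∘ₗ piMinus k m)
      rw [LinearMap.id_comp]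
    · show (piMinus k n ∘ₗ shiftMap m (n+1) (m-n) (fun t ht => by omega) c) ∘ₗ LinearMap.id
        = piMinus k n ∘ₗ shiftMap m (n+1) (m-n) (fun t ht => by omega) c
      rw [LinearMap.comp_id]
  · intro x hx
    replace hx := (mem_homSpace_iff (ρ := E1 k m) (ρ' := E4 k n) _).mp hx
    obtain ⟨f1, f2, f3⟩ := x
    obtain ⟨c13, c12, c23⟩ := hx
    replace c13 : f3 ∘ₗ piPlus k m = piPlus k n ∘ₗ f1 := c13
    replace c12 : f2 ∘ₗ piMinus k m = LinearMap.id ∘ₗ f1 := c12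
    replace c23 : f3 ∘ₗ LinearMap.id = piMinus k n ∘ₗ f2 := c23
    have hf1 : f1 = f2 ∘ₗ piMinus k m := by
      rw [LinearMap.id_comp] at c12; exact c12.symm
    have hf3 : f3 = piMinus k n ∘ₗ f2 := by
      rw [LinearMap.comp_id] at c23; exact c23
    have hc : ∀ (v : Fin (m+1) → k) (i : Fin n),
        f2 (LinearMap.funLeft k k Fin.castSucc v) (Fin.succ i)
          = f2 (LinearMap.funLeft k k Fin.succ v) (Fin.castSucc i) := by
      intro v i
      have h := congrFun (LinearMap.congr_fun c13 v) i
      rw [hf1, hf3] at h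
      simpa [piPlus, piMinus, LinearMap.funLeft_apply] using h
    have hbd : ∀ i, i < n → ∀ j, j + 1 = m → matOf f2 i j = 0 := by
      intro i hi j hj
      have h := hc (Pi.single (⟨j+1, by omega⟩ : Fin (m+1)) 1) ⟨i, hi⟩
      rw [aux_funLeft_castSucc_single_zero m (j+1) (by omega) (by omega),
        aux_funLeft_succ_single m j (by omega) (by omega)] at h
      rw [matOf_pos f2 (by omega) (by omega)]
      simpa using h.symm
    have h1 : ∀ i < n, ∀ j, matOf f2 (i+1) (j+1) = matOf f2 i j := by
      intro i hi j
      by_cases hj : j + 1 < m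
      · have h := hc (Pi.single (⟨j+1, by omega⟩ : Fin (m+1)) 1) ⟨i, hi⟩
        rw [aux_funLeft_castSucc_single m (j+1) hj (by omega),
          aux_funLeft_succ_single m j (by omega) (by omega)] at h
        rw [matOf_pos f2 (by omega) hj, matOf_pos f2 (by omega) (by omega)]
        exact h
      · rw [matOf_neg f2 (by omega)]
        by_cases hj2 : j < m
        · exact (hbd i hi j (by omega)).symm
        · rw [matOf_neg f2 (by omega)]
    have h2 : ∀ i < n, matOf f2 (i+1) 0 = 0 := by
      intro i hi
      by_cases hm : 0 < m
      · have h := hc (Pi.single (⟨0, by omega⟩ : Fin (m+1)) 1) ⟨i, hi⟩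
        rw [aux_funLeft_castSucc_single m 0 hm (by omega),
          aux_funLeft_succ_single_zero m] at h
        rw [matOf_pos f2 (by omega) hm]
        simpa using h
      · rw [matOf_neg f2 (by omega)]
    have hM := aux_key1 (matOf f2) h1 h2
    have hz : ∀ s, ¬ (s + n + 1 ≤ m) → matOf f2 0 s = 0 := by
      intro s hs
      by_cases hsm : s < m
      · have hb := hbd (m-1-s) (by omega) (m-1) (by omega)
        rw [hM (m-1-s) (by omega) (m-1), if_pos (by omega),
          show m-1-(m-1-s) = s from by omega] at hb
        exact hb
      · exact matOf_neg f2 (by omega)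
    refine ⟨fun t => matOf f2 0 (t : ℕ), ?_⟩
    have hf2 : shiftMap m (n+1) (m-n) (fun t ht => by omega)
        (fun t => matOf f2 0 (t : ℕ)) = f2 := by
      apply (Pi.basisFun k (Fin m)).ext
      intro j
      rw [Pi.basisFun_apply]
      funext i
      rw [shiftMap_single]
      have hr : f2 (Pi.single j 1) i = matOf f2 (i : ℕ) (j : ℕ) :=
        (matOf_pos f2 i.isLt j.isLt).symm
      rw [hr, hM (i : ℕ) (by have := i.isLt; omega) (j : ℕ)]
      by_cases hcnd : (i : ℕ) ≤ (j : ℕ) ∧ (j : ℕ) - (i : ℕ) < m - n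
      · rw [dif_pos hcnd, if_pos hcnd.1]
      · rw [dif_neg hcnd]
        by_cases h1c : (i : ℕ) ≤ (j : ℕ)
        · rw [if_pos h1c, hz ((j : ℕ) - (i : ℕ)) (by have := j.isLt; omega)]
        · rw [if_neg h1c]
    refine Prod.ext ?_ (Prod.ext ?_ ?_)
    · show shiftMap m (n+1) (m-n) (fun t ht => by omega)
          (fun t => matOf f2 0 (t : ℕ)) ∘ₗ piMinus k m = f1
      rw [hf2]; exact hf1.symm
    · exact hf2
    · show piMinus k n ∘ₗ shiftMap m (n+1) (m-n) (fun t ht => by omega)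
          (fun t => matOf f2 0 (t : ℕ)) = f3
      rw [hf2]; exact hf3.symm

lemma homA (k : Type u) [Field k] (m n : ℕ) :
    RepQ1.hom (E1 k m) (E4 k n) = m - n := by
  have hinj : Function.Injective (psiA k m n) := by
    intro c c' h
    have h2 : shiftMap m (n+1) (m-n) (fun t ht => by omega) c
        = shiftMap m (n+1) (m-n) (fun t ht => by omega) c' :=
      congrArg (fun x => x.2.1) h
    funext t
    have ht : (t : ℕ) < m := by have := t.isLt; omega
    have e := congrFun (LinearMap.congr_fun h2
      (Pi.single (⟨(t : ℕ), ht⟩ : Fin m) 1)) (⟨0, by omega⟩ : Fin (n+1))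
    rw [shiftMap_eval0, shiftMap_eval0] at e
    exact e
  have h3 : Module.finrank k (LinearMap.range (psiA k m n))
      = Module.finrank k (RepQ1.homSpace (E1 k m) (E4 k n)) :=
    congrArg (fun S : Submodule k _ => Module.finrank k (↥S)) (range_psiA k m n)
  calc RepQ1.hom (E1 k m) (E4 k n)
      = Module.finrank k (LinearMap.range (psiA k m n)) := h3.symm
    _ = Module.finrank k (Fin (m-n) → k) := LinearMap.finrank_range_of_inj hinj
    _ = m - n := Module.finrank_fin_fun (R := k)

/-- The solutions for `Hom(E4^n, E1^m)`. -/
def psiB (k : Type u) [Field k] (m n : ℕ) : (Fin (n + 1 - m) → k) →ₗ[k]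
    (((Fin (n+1) → k) →ₗ[k] (Fin (m+1) → k)) ×
     ((Fin (n+1) → k) →ₗ[k] (Fin m → k)) ×
     ((Fin n → k) →ₗ[k] (Fin m → k))) where
  toFun c :=
    (shiftMap (n+1) (m+1) (n+1-m) (fun t ht => by omega) c,
     piMinus k m ∘ₗ shiftMap (n+1) (m+1) (n+1-m) (fun t ht => by omega) c,
     shiftMap n m (n+1-m) (fun t ht => by omega) c)
  map_add' c c' := by
    simp only [shiftMap_add, LinearMap.add_comp, LinearMap.comp_add, Prod.mk_add_mk]
  map_smul' r c := by
    simp only [shiftMap_smul, LinearMap.smul_comp, LinearMap.comp_smul, Prod.smul_mk,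
      RingHom.id_apply]

lemma range_psiB (k : Type u) [Field k] (m n : ℕ) :
    LinearMap.range (psiB k m n) = RepQ1.homSpace (E4 k n) (E1 k m) := by
  apply le_antisymm
  · rintro x ⟨c, rfl⟩
    apply (mem_homSpace_iff (ρ := E4 k n) (ρ' := E1 k m) _).mpr
    refine ⟨?_, ?_, ?_⟩
    · show shiftMap n m (n+1-m) (fun t ht => by omega) c ∘ₗ piPlus k n
        = piPlus k m ∘ₗ shiftMap (n+1) (m+1) (n+1-m) (fun t ht => by omega) c
      apply LinearMap.ext; intro v
      funext i
      simp only [LinearMap.comp_apply, piPlus, piMinus, LinearMap.funLeft_apply, shiftMap_apply]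
      refine Finset.sum_congr rfl fun t _ => ?_
      congr 1
    · show (piMinus k m ∘ₗ shiftMap (n+1) (m+1) (n+1-m) (fun t ht => by omega) c)
          ∘ₗ LinearMap.id
        = piMinus k m ∘ₗ shiftMap (n+1) (m+1) (n+1-m) (fun t ht => by omega) c
      rw [LinearMap.comp_id]
    · show shiftMap n m (n+1-m) (fun t ht => by omega) c ∘ₗ piMinus k n
        = LinearMap.id ∘ₗ (piMinus k m ∘ₗ shiftMap (n+1) (m+1) (n+1-m) (fun t ht => by omega) c)
      rw [LinearMap.id_comp]
      apply LinearMap.ext; intro v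
      funext i
      simp only [LinearMap.comp_apply, piPlus, piMinus, LinearMap.funLeft_apply, shiftMap_apply]
      refine Finset.sum_congr rfl fun t _ => ?_
      congr 1
      apply congrArg
      apply Fin.ext
      simp
      omega
  · intro x hx
    replace hx := (mem_homSpace_iff (ρ := E4 k n) (ρ' := E1 k m) _).mp hx
    obtain ⟨f1, f2, f3⟩ := x
    obtain ⟨c13, c12, c23⟩ := hx
    replace c13 : f3 ∘ₗ piPlus k n = piPlus k m ∘ₗ f1 := c13
    replace c12 : f2 ∘ₗ LinearMap.id = piMinus k m ∘ₗ f1 := c12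
    replace c23 : f3 ∘ₗ piMinus k n = LinearMap.id ∘ₗ f2 := c23
    have hf2 : f2 = piMinus k m ∘ₗ f1 := by
      rw [LinearMap.comp_id] at c12; exact c12
    rw [LinearMap.id_comp] at c23
    have hcA : ∀ (v : Fin (n+1) → k) (i : Fin m),
        f3 (LinearMap.funLeft k k Fin.succ v) i = f1 v (Fin.succ i) := by
      intro v i
      have h := congrFun (LinearMap.congr_fun c23 v) i
      rw [hf2] at h
      simpa [piMinus, LinearMap.funLeft_apply] using h
    have hcB : ∀ (v : Fin (n+1) → k) (i : Fin m),
        f3 (LinearMap.funLeft k k Fin.castSucc v) i = f1 v (Fin.castSucc i) := by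
      intro v i
      have h := congrFun (LinearMap.congr_fun c13 v) i
      simpa [piPlus, LinearMap.funLeft_apply] using h
    have hbd : ∀ i, i < m → matOf f1 i n = 0 := by
      intro i hi
      have h := hcB (Pi.single (⟨n, by omega⟩ : Fin (n+1)) 1) ⟨i, hi⟩
      rw [aux_funLeft_castSucc_single_zero n n (by omega) (by omega)] at h
      rw [matOf_pos f1 (by omega) (by omega)]
      simpa using h.symm
    have h1 : ∀ i < m, ∀ j, matOf f1 (i+1) (j+1) = matOf f1 i j := by
      intro i hi j
      by_cases hj : j < n
      · have hA' := hcA (Pi.single (⟨j+1, by omega⟩ : Fin (n+1)) 1) ⟨i, hi⟩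
        rw [aux_funLeft_succ_single n j hj (by omega)] at hA'
        have hB' := hcB (Pi.single (⟨j, by omega⟩ : Fin (n+1)) 1) ⟨i, hi⟩
        rw [aux_funLeft_castSucc_single n j hj (by omega)] at hB'
        rw [matOf_pos f1 (by omega) (by omega), matOf_pos f1 (by omega) (by omega)]
        exact hA'.symm.trans hB'
      · by_cases hj2 : j < n + 1
        · have hjn : j = n := by omega
          subst hjn
          rw [matOf_neg f1 (by omega)]
          exact (hbd i hi).symm
        · rw [matOf_neg f1 (by omega), matOf_neg f1 (by omega)]
    have h2 : ∀ i < m, matOf f1 (i+1) 0 = 0 := by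
      intro i hi
      have h := hcA (Pi.single (⟨0, by omega⟩ : Fin (n+1)) 1) ⟨i, hi⟩
      rw [aux_funLeft_succ_single_zero n] at h
      rw [matOf_pos f1 (by omega) (by omega)]
      simpa using h.symm
    have hM := aux_key1 (matOf f1) h1 h2
    have hz : ∀ s, ¬ (s + m + 1 ≤ n + 1) → matOf f1 0 s = 0 := by
      intro s hs
      by_cases hsn : s < n + 1
      · have hb := hbd (n - s) (by omega)
        rw [hM (n - s) (by omega) n, if_pos (by omega),
          show n - (n - s) = s from by omega] at hb
        exact hb
      · exact matOf_neg f1 (by omega)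
    refine ⟨fun t => matOf f1 0 (t : ℕ), ?_⟩
    have hS1 : shiftMap (n+1) (m+1) (n+1-m) (fun t ht => by omega)
        (fun t => matOf f1 0 (t : ℕ)) = f1 := by
      apply (Pi.basisFun k (Fin (n+1))).ext
      intro j
      rw [Pi.basisFun_apply]
      funext i
      rw [shiftMap_single]
      have hr : f1 (Pi.single j 1) i = matOf f1 (i : ℕ) (j : ℕ) :=
        (matOf_pos f1 i.isLt j.isLt).symm
      rw [hr, hM (i : ℕ) (by have := i.isLt; omega) (j : ℕ)]
      by_cases hcnd : (i : ℕ) ≤ (j : ℕ) ∧ (j : ℕ) - (i : ℕ) < n + 1 - m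
      · rw [dif_pos hcnd, if_pos hcnd.1]
      · rw [dif_neg hcnd]
        by_cases h1c : (i : ℕ) ≤ (j : ℕ)
        · rw [if_pos h1c, hz ((j : ℕ) - (i : ℕ)) (by have := j.isLt; omega)]
        · rw [if_neg h1c]
    have hS3 : shiftMap n m (n+1-m) (fun t ht => by omega)
        (fun t => matOf f1 0 (t : ℕ)) = f3 := by
      apply (Pi.basisFun k (Fin n)).ext
      intro j
      rw [Pi.basisFun_apply]
      funext i
      rw [shiftMap_single]
      have e1 : f3 (Pi.single j 1) i
          = f1 (Pi.single (⟨(j : ℕ)+1, by have := j.isLt; omega⟩ : Fin (n+1)) 1) (Fin.succ i) := by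
        have h := hcA (Pi.single (⟨(j : ℕ)+1, by have := j.isLt; omega⟩ : Fin (n+1)) 1) i
        rw [aux_funLeft_succ_single n (j : ℕ) j.isLt (by have := j.isLt; omega)] at h
        exact h
      rw [e1]
      have hr : f1 (Pi.single (⟨(j : ℕ)+1, by have := j.isLt; omega⟩ : Fin (n+1)) 1) (Fin.succ i)
          = matOf f1 ((i : ℕ)+1) ((j : ℕ)+1) :=
        (matOf_pos f1 (by have := i.isLt; omega) (by have := j.isLt; omega)).symm
      rw [hr, hM ((i : ℕ)+1) (by have := i.isLt; omega) ((j : ℕ)+1)]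
      by_cases hcnd : (i : ℕ) ≤ (j : ℕ) ∧ (j : ℕ) - (i : ℕ) < n + 1 - m
      · rw [dif_pos hcnd, if_pos (by omega), Nat.succ_sub_succ]
      · rw [dif_neg hcnd]
        by_cases h1c : (i : ℕ) ≤ (j : ℕ)
        · rw [if_pos (by omega), Nat.succ_sub_succ,
            hz ((j : ℕ) - (i : ℕ)) (by have := j.isLt; omega)]
        · rw [if_neg (by omega)]
    refine Prod.ext ?_ (Prod.ext ?_ ?_)
    · exact hS1
    · show piMinus k m ∘ₗ shiftMap (n+1) (m+1) (n+1-m) (fun t ht => by omega)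
          (fun t => matOf f1 0 (t : ℕ)) = f2
      rw [hS1]; exact hf2.symm
    · exact hS3

lemma homB (k : Type u) [Field k] (m n : ℕ) :
    RepQ1.hom (E4 k n) (E1 k m) = n + 1 - m := by
  have hinj : Function.Injective (psiB k m n) := by
    intro c c' h
    have h2 : shiftMap (n+1) (m+1) (n+1-m) (fun t ht => by omega) c
        = shiftMap (n+1) (m+1) (n+1-m) (fun t ht => by omega) c' :=
      congrArg (fun x => x.1) h
    funext t
    have ht : (t : ℕ) < n + 1 := by have := t.isLt; omega
    have e := congrFun (LinearMap.congr_fun h2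
      (Pi.single (⟨(t : ℕ), ht⟩ : Fin (n+1)) 1)) (⟨0, by omega⟩ : Fin (m+1))
    rw [shiftMap_eval0, shiftMap_eval0] at e
    exact e
  have h3 : Module.finrank k (LinearMap.range (psiB k m n))
      = Module.finrank k (RepQ1.homSpace (E4 k n) (E1 k m)) :=
    congrArg (fun S : Submodule k _ => Module.finrank k (↥S)) (range_psiB k m n)
  calc RepQ1.hom (E4 k n) (E1 k m)
      = Module.finrank k (LinearMap.range (psiB k m n)) := h3.symm
    _ = Module.finrank k (Fin (n+1-m) → k) := LinearMap.finrank_range_of_inj hinj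
    _ = n + 1 - m := Module.finrank_fin_fun (R := k)

end AuxDev2

/-- `hom`/`ext1` dimensions between `E₁^m` and `E₄^n`. -/
theorem statement_4 (k : Type u) [Field k] [IsAlgClosed k] :
    (∀ m n : ℕ, m ≤ n →
      RepQ1.hom (E1 k m) (E4 k n) = 0 ∧
      RepQ1.ext1 (E1 k m) (E4 k n) = n - m ∧
      RepQ1.hom (E4 k n) (E1 k m) = 1 + n - m ∧
      RepQ1.ext1 (E4 k n) (E1 k m) = 0) ∧
    (∀ m n : ℕ, n < m →
      RepQ1.hom (E1 k m) (E4 k n) = m - n ∧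
      RepQ1.ext1 (E1 k m) (E4 k n) = 0 ∧
      RepQ1.hom (E4 k n) (E1 k m) = 0 ∧
      RepQ1.ext1 (E4 k n) (E1 k m) = m - n - 1) := by
  have main : ∀ m n : ℕ,
      RepQ1.ext1 (E1 k m) (E4 k n) + (m * n + m + n + 1 + (m * n + m + m * n))
        = (m - n) + (m * n + n + (m * n + m + n + 1 + m * n)) ∧
      RepQ1.ext1 (E4 k n) (E1 k m) + (m * n + m + n + 1 + (m * n + m + m * n))
        = (n + 1 - m) + (m * n + m + (m * n + m + (m * n + m))) := by
    intro m n
    have eA0 := aux_ext1_add (E1 k m) (E4 k n)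
    have eB0 := aux_ext1_add (E4 k n) (E1 k m)
    have eA : RepQ1.ext1 (E1 k m) (E4 k n)
        + Module.finrank k (((Fin (m+1) → k) →ₗ[k] (Fin (n+1) → k)) ×
            ((Fin m → k) →ₗ[k] (Fin (n+1) → k)) × ((Fin m → k) →ₗ[k] (Fin n → k)))
      = RepQ1.hom (E1 k m) (E4 k n)
        + Module.finrank k (((Fin (m+1) → k) →ₗ[k] (Fin n → k)) ×
            ((Fin (m+1) → k) →ₗ[k] (Fin (n+1) → k)) × ((Fin m → k) →ₗ[k] (Fin n → k))) := eA0
    have eB : RepQ1.ext1 (E4 k n) (E1 k m)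
        + Module.finrank k (((Fin (n+1) → k) →ₗ[k] (Fin (m+1) → k)) ×
            ((Fin (n+1) → k) →ₗ[k] (Fin m → k)) × ((Fin n → k) →ₗ[k] (Fin m → k)))
      = RepQ1.hom (E4 k n) (E1 k m)
        + Module.finrank k (((Fin (n+1) → k) →ₗ[k] (Fin m → k)) ×
            ((Fin (n+1) → k) →ₗ[k] (Fin m → k)) × ((Fin (n+1) → k) →ₗ[k] (Fin m → k))) := eB0
    clear eA0 eB0
    simp only [Module.finrank_prod, Module.finrank_linearMap, Module.finrank_fin_fun] at eA eB
    rw [homA k m n] at eA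
    rw [homB k m n] at eB
    rw [show (m+1)*(n+1) = m*n+m+n+1 from by ring, show m*(n+1) = m*n+m from by ring,
      show (m+1)*n = m*n+n from by ring] at eA
    rw [show (n+1)*(m+1) = m*n+m+n+1 from by ring, show (n+1)*m = m*n+m from by ring,
      show n*m = m*n from by ring] at eB
    generalize hP : m * n = P at eA eB ⊢
    exact ⟨by omega, by omega⟩
  constructor
  · intro m n hmn
    obtain ⟨eA, eB⟩ := main m n
    generalize hP : m * n = P at eA eB
    refine ⟨?_, ?_, ?_, ?_⟩
    · rw [homA k m n]; omega
    · omega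
    · rw [homB k m n]; omega
    · omega
  · intro m n hmn
    obtain ⟨eA, eB⟩ := main m n
    generalize hP : m * n = P at eA eB
    refine ⟨?_, ?_, ?_, ?_⟩
    · rw [homA k m n]
    · omega
    · rw [homB k m n]; omega
    · omega
end
end
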